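/- arXiv:1904.08844 — 2 statements merged into one kernel-verified Lean document; each statement's English description precedes it below -/
import Mathlib

section
/- Suppose the Brascamp-Lieb inequality $\left|\int_{\mathbb{R}^m} \prod_{j=1}^n F_j(I_j x)\,dx\right| \le C \prod_{j=1}^n \|F_j\|_{L^{p_j}}$ holds for all Schwartz functions $F_j$, with $p_1 < \infty$. Then the linear map $I_1 : \mathbb{R}^m \to \mathbb{R}^{k_1}$ is surjective, provided the form is not identically zero on Schwartz tuples. -/
open ENNReal MeasureTheory

open Module in

lemma my_det_prodMap {M N : Type*} [AddCommGroup M] [Module ℝ M] [FiniteDimensional ℝ M]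
    [AddCommGroup N] [Module ℝ N] [FiniteDimensional ℝ N]
    (f : M →ₗ[ℝ] M) (g : N →ₗ[ℝ] N) :
    LinearMap.det (f.prodMap g) = LinearMap.det f * LinearMap.det g := by
  classical
  let b₁ := Module.finBasis ℝ M
  let b₂ := Module.finBasis ℝ N
  rw [← LinearMap.det_toMatrix (b₁.prod b₂), LinearMap.toMatrix_prodMap,
    Matrix.det_fromBlocks_zero₁₂, LinearMap.det_toMatrix, LinearMap.det_toMatrix]

/-- The scaling equiv: fixes `ker φ`, scales by `t` along `u`. -/
noncomputable def scaleEquiv {K : ℕ} (φ : Module.Dual ℝ (Fin K → ℝ)) (u : Fin K → ℝ)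
    (h : IsCompl (LinearMap.ker φ) (ℝ ∙ u)) (t : ℝ) (ht : t ≠ 0) :
    (Fin K → ℝ) ≃ₗ[ℝ] (Fin K → ℝ) :=
  ((LinearMap.ker φ).prodEquivOfIsCompl (ℝ ∙ u) h).symm.trans
    (((LinearEquiv.refl ℝ (LinearMap.ker φ)).prodCongr
      (LinearEquiv.smulOfNeZero ℝ (ℝ ∙ u) t ht)).trans
      ((LinearMap.ker φ).prodEquivOfIsCompl (ℝ ∙ u) h))

lemma scaleEquiv_fixes {K : ℕ} (φ : Module.Dual ℝ (Fin K → ℝ)) (u : Fin K → ℝ)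
    (h : IsCompl (LinearMap.ker φ) (ℝ ∙ u)) (t : ℝ) (ht : t ≠ 0)
    {x : Fin K → ℝ} (hx : x ∈ LinearMap.ker φ) :
    scaleEquiv φ u h t ht x = x := by
  have h1 : ((LinearMap.ker φ).prodEquivOfIsCompl (ℝ ∙ u) h).symm x
      = ((⟨x, hx⟩ : LinearMap.ker φ), 0) :=
    Submodule.prodEquivOfIsCompl_symm_apply_left (p := LinearMap.ker φ) (q := ℝ ∙ u) h
      (⟨x, hx⟩ : LinearMap.ker φ)
  simp only [scaleEquiv, LinearEquiv.trans_apply, h1, LinearEquiv.prodCongr_apply,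
    LinearEquiv.refl_apply, map_zero]
  rw [Submodule.coe_prodEquivOfIsCompl']
  simp

lemma scaleEquiv_det {K : ℕ} (φ : Module.Dual ℝ (Fin K → ℝ)) (u : Fin K → ℝ) (hu : u ≠ 0)
    (h : IsCompl (LinearMap.ker φ) (ℝ ∙ u)) (t : ℝ) (ht : t ≠ 0) :
    LinearMap.det ((scaleEquiv φ u h t ht) : (Fin K → ℝ) →ₗ[ℝ] (Fin K → ℝ)) = t := by
  classical
  set e := (LinearMap.ker φ).prodEquivOfIsCompl (ℝ ∙ u) h
  have heq : ((scaleEquiv φ u h t ht) : (Fin K → ℝ) →ₗ[ℝ] (Fin K → ℝ))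
      = (e : _ →ₗ[ℝ] _) ∘ₗ
        ((LinearMap.id.prodMap (t • LinearMap.id)) :
          (LinearMap.ker φ × (ℝ ∙ u)) →ₗ[ℝ] _) ∘ₗ (e.symm : _ →ₗ[ℝ] _) := by
    ext x
    simp [scaleEquiv, e, LinearEquiv.smulOfNeZero, LinearEquiv.smulOfUnit,
      DistribMulAction.toLinearEquiv]
  rw [heq, LinearMap.det_conj, my_det_prodMap, LinearMap.det_id, one_mul,
    LinearMap.det_smul, LinearMap.det_id, finrank_span_singleton hu]
  simp

lemma scaleEquiv_eLpNorm {K : ℕ} (φ : Module.Dual ℝ (Fin K → ℝ)) (u : Fin K → ℝ) (hu : u ≠ 0)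
    (h : IsCompl (LinearMap.ker φ) (ℝ ∙ u)) (t : ℝ) (ht : 0 < t)
    (f : (Fin K → ℝ) → ℂ) (hf : Continuous f) (q : ℝ≥0∞) (hq : q ≠ ⊤) :
    eLpNorm (f ∘ (scaleEquiv φ u h t ht.ne')) q volume
      = ENNReal.ofReal t⁻¹ ^ (1 / q).toReal * eLpNorm f q volume := by
  set S := scaleEquiv φ u h t ht.ne' with hS
  have hdet : LinearMap.det ((S : (Fin K → ℝ) →ₗ[ℝ] (Fin K → ℝ))) = t :=
    scaleEquiv_det φ u hu h t ht.ne'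
  have hmap : Measure.map (⇑S) volume = ENNReal.ofReal t⁻¹ • volume := by
    have h2 := Real.map_linearMap_volume_pi_eq_smul_volume_pi
      (f := (S : (Fin K → ℝ) →ₗ[ℝ] (Fin K → ℝ))) (by rw [hdet]; exact ht.ne')
    rw [hdet, abs_of_pos (inv_pos.2 ht)] at h2
    simpa using h2
  have hSm : AEMeasurable (⇑S) volume :=
    (LinearMap.continuous_of_finiteDimensional
      ((S : (Fin K → ℝ) →ₗ[ℝ] (Fin K → ℝ)))).aemeasurable
  rw [← eLpNorm_map_measure hf.aestronglyMeasurable hSm, hmap,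
    eLpNorm_smul_measure_of_ne_top hq, smul_eq_mul]


/-- If a Brascamp–Lieb inequality holds with `p 0 < ∞` and the form is not
identically zero on Schwartz tuples, then `I 0` is surjective. -/
theorem brascamp_lieb_surjectivity
    (m n : ℕ) (k : Fin n → ℕ)
    (I : ∀ j : Fin n, (Fin m → ℝ) →ₗ[ℝ] (Fin (k j) → ℝ))
    (p : Fin n → ℝ≥0∞) (hp : ∀ j, 1 ≤ p j) (hn : 0 < n)
    (h0 : Fin n) (h0def : h0 = ⟨0, hn⟩) (hpfin : p h0 < ⊤)
    (C : ℝ) (hC : 0 < C)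
    (hBL : ∀ F : ∀ j : Fin n, SchwartzMap (Fin (k j) → ℝ) ℂ,
      ‖∫ x : Fin m → ℝ, ∏ j : Fin n, F j (I j x)‖
        ≤ C * ∏ j : Fin n, (eLpNorm (⇑(F j)) (p j) volume).toReal)
    (hnz : ∃ F : ∀ j : Fin n, SchwartzMap (Fin (k j) → ℝ) ℂ,
      (∫ x : Fin m → ℝ, ∏ j : Fin n, F j (I j x)) ≠ 0) :
    Function.Surjective (I h0) := by
  classical
  obtain ⟨F, hF⟩ := hnz
  by_contra hsurj
  rw [← LinearMap.range_eq_top] at hsurj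
  obtain ⟨φ, hφ0, hφmap⟩ :=
    Submodule.exists_dual_map_eq_bot_of_lt_top (p := LinearMap.range (I h0))
      (lt_top_iff_ne_top.2 hsurj) inferInstance
  have hφrange : ∀ x, I h0 x ∈ LinearMap.ker φ := by
    intro x
    have hmem : φ (I h0 x) ∈ (LinearMap.range (I h0)).map φ :=
      Submodule.mem_map_of_mem (LinearMap.mem_range_self _ x)
    rw [hφmap] at hmem
    simpa using hmem
  obtain ⟨v, hv⟩ : ∃ v, φ v ≠ 0 := by
    by_contra hcon
    push_neg at hcon
    exact hφ0 (LinearMap.ext fun x => hcon x)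
  set u : Fin (k h0) → ℝ := (φ v)⁻¹ • v with hu_def
  have hu1 : φ u = 1 := by
    rw [hu_def, _root_.map_smul, smul_eq_mul, inv_mul_cancel₀ hv]
  have hune : u ≠ 0 := by
    intro hz
    rw [hz, map_zero] at hu1
    exact one_ne_zero hu1.symm
  have hdisj : Disjoint (LinearMap.ker φ) (ℝ ∙ u) := by
    rw [Submodule.disjoint_def]
    intro y hy hy2
    obtain ⟨c, rfl⟩ := Submodule.mem_span_singleton.1 hy2
    have hc : c * φ u = 0 := by
      simpa [_root_.map_smul, smul_eq_mul] using (LinearMap.mem_ker.1 hy)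
    rw [hu1, mul_one] at hc
    simp [hc]
  have hcompl : IsCompl (LinearMap.ker φ) (ℝ ∙ u) :=
    Module.Dual.isCompl_ker_of_disjoint_of_ne_bot hφ0 hdisj
      (fun hb => hune (Submodule.span_singleton_eq_bot.1 hb))
  set r' : ℝ := (1 / p h0).toReal with hr'
  have hp0 : p h0 ≠ 0 := by
    intro hh
    have := hp h0
    rw [hh] at this
    exact (by simp at this : False)
  have hr'pos : 0 < r' := by
    rw [hr']
    apply ENNReal.toReal_pos
    · simp [one_div, ENNReal.inv_ne_zero, hpfin.ne]
    · simp [one_div, ENNReal.inv_ne_top, hp0]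
  set A := ∫ x : Fin m → ℝ, ∏ j, F j (I j x) with hA
  set KK : ℝ := C * ∏ j, (eLpNorm (⇑(F j)) (p j) volume).toReal with hKK
  have key : ∀ t : ℝ, 0 < t → ‖A‖ ≤ t⁻¹ ^ r' * KK := by
    intro t ht
    set S := scaleEquiv φ u hcompl t ht.ne' with hS
    set G : SchwartzMap (Fin (k h0) → ℝ) ℂ :=
      SchwartzMap.compCLMOfContinuousLinearEquiv ℝ S.toContinuousLinearEquiv (F h0) with hG
    have hGcoe : ⇑G = ⇑(F h0) ∘ ⇑S := by
      rw [hG, SchwartzMap.compCLMOfContinuousLinearEquiv_apply]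
      rw [LinearEquiv.coe_toContinuousLinearEquiv']
    set F' : ∀ j, SchwartzMap (Fin (k j) → ℝ) ℂ := Function.update F h0 G with hF'
    have hLHS : (∫ x : Fin m → ℝ, ∏ j, F' j (I j x)) = A := by
      rw [hA]
      congr 1
      funext x
      apply Finset.prod_congr rfl
      intro j _
      rcases eq_or_ne j h0 with rfl | hj
      · rw [hF', Function.update_self]
        have : (⇑G) (I j x) = (⇑(F j) ∘ ⇑S) (I j x) := by rw [hGcoe]
        rw [this]
        simp only [Function.comp_apply]
        rw [hS, scaleEquiv_fixes φ u hcompl t ht.ne' (hφrange x)]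
      · rw [hF', Function.update_of_ne hj]
    have hbound := hBL F'
    rw [hLHS] at hbound
    have hGnorm : eLpNorm (⇑G) (p h0) volume
        = ENNReal.ofReal t⁻¹ ^ r' * eLpNorm (⇑(F h0)) (p h0) volume := by
      rw [hGcoe, hS, scaleEquiv_eLpNorm φ u hune hcompl t ht _ (F h0).continuous _ hpfin.ne, hr']
    have hprod : (∏ j, (eLpNorm (⇑(F' j)) (p j) volume).toReal)
        = t⁻¹ ^ r' * ∏ j, (eLpNorm (⇑(F j)) (p j) volume).toReal := by
      rw [← Finset.mul_prod_erase Finset.univ _ (Finset.mem_univ h0),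
        ← Finset.mul_prod_erase Finset.univ
          (fun j => (eLpNorm (⇑(F j)) (p j) volume).toReal) (Finset.mem_univ h0)]
      have h1 : (eLpNorm (⇑(F' h0)) (p h0) volume).toReal
          = t⁻¹ ^ r' * (eLpNorm (⇑(F h0)) (p h0) volume).toReal := by
        rw [hF', Function.update_self, hGnorm, ENNReal.toReal_mul]
        congr 1
        rw [← ENNReal.toReal_rpow, ENNReal.toReal_ofReal (inv_pos.2 ht).le]
      have h2 : ∀ j ∈ Finset.univ.erase h0,
          (eLpNorm (⇑(F' j)) (p j) volume).toReal
            = (eLpNorm (⇑(F j)) (p j) volume).toReal := by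
        intro j hj
        rw [hF', Function.update_of_ne (Finset.ne_of_mem_erase hj)]
      rw [h1, Finset.prod_congr rfl h2]
      ring
    calc ‖A‖ ≤ C * ∏ j, (eLpNorm (⇑(F' j)) (p j) volume).toReal := hbound
      _ = t⁻¹ ^ r' * KK := by rw [hprod, hKK]; ring
  have hA0 : 0 < ‖A‖ := norm_pos_iff.2 hF
  have htend : Filter.Tendsto (fun t : ℝ => t⁻¹ ^ r' * KK) Filter.atTop (nhds 0) := by
    have h1 : Filter.Tendsto (fun t : ℝ => t ^ (-r') * KK) Filter.atTop (nhds 0) := by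
      simpa using (tendsto_rpow_neg_atTop hr'pos).mul_const KK
    apply h1.congr'
    filter_upwards [Filter.eventually_ge_atTop (1 : ℝ)] with t ht
    rw [Real.rpow_neg (le_trans zero_le_one ht), ← Real.inv_rpow (le_trans zero_le_one ht)]
  have hle : ‖A‖ ≤ 0 :=
    ge_of_tendsto htend (by
      filter_upwards [Filter.eventually_ge_atTop (1 : ℝ)] with t ht
      exact key t (lt_of_lt_of_le one_pos ht))
  linarith
end

section
/- Suppose linear maps $I_j : \mathbb{R}^m \to \mathbb{R}^{k_j}$ and exponents $p_j \in (0, \infty]$ satisfy: (i) $\dim V \le \sum_{j=1}^n \frac{1}{p_j}\dim(I_j V)$ for every subspace $V \subseteq \mathbb{R}^m$, (ii) equality holds for $V = \mathbb{R}^m$, and (iii) $p_1 < 1$ with $I_1$ surjective onto $\mathbb{R}^{k_1}$ and $k_1 > 0$. Then a contradiction follows; that is, no such configuration exists. -/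
open ENNReal Module

/-- No Brascamp–Lieb datum can satisfy the dimensional conditions with an
exponent `p 0 < 1`, `I 0` surjective and `k 0 > 0`. -/
theorem no_brascamp_lieb_with_exponent_below_one
    (m n : ℕ) (k : Fin n → ℕ) (hn : 0 < n)
    (I : ∀ j : Fin n, (Fin m → ℝ) →ₗ[ℝ] (Fin (k j) → ℝ))
    (p : Fin n → ℝ≥0∞) (hp : ∀ j, 0 < p j)
    (hdim : ∀ V : Submodule ℝ (Fin m → ℝ),
      (finrank ℝ V : ℝ≥0∞)
        ≤ ∑ j : Fin n, (p j)⁻¹ * (finrank ℝ (V.map (I j)) : ℝ≥0∞))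
    (heq : (m : ℝ≥0∞)
      = ∑ j : Fin n, (p j)⁻¹
          * (finrank ℝ ((⊤ : Submodule ℝ (Fin m → ℝ)).map (I j)) : ℝ≥0∞))
    (j0 : Fin n) (hj0 : j0 = ⟨0, hn⟩)
    (hp0 : p j0 < 1) (hsurj : Function.Surjective (I j0)) (hk0 : 0 < k j0) :
    False := by
  classical
  set W := LinearMap.ker (I j0) with hW
  -- rank-nullity
  have hrange : LinearMap.range (I j0) = ⊤ := LinearMap.range_eq_top.mpr hsurj
  have hrk : finrank ℝ (LinearMap.range (I j0)) = k j0 := by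
    rw [hrange, finrank_top]
    simp
  have hRN : finrank ℝ (LinearMap.range (I j0)) + finrank ℝ W = m := by
    rw [LinearMap.finrank_range_add_finrank_ker]
    simp
  have hWrank : finrank ℝ W + k j0 = m := by omega
  -- map of W under I j0 is trivial
  have hmapW : W.map (I j0) = ⊥ := by
    rw [le_bot_iff.symm, Submodule.map_le_iff_le_comap]
    intro x hx
    simpa [hW] using hx
  -- top maps
  have htop : ∀ j, (⊤ : Submodule ℝ (Fin m → ℝ)).map (I j) = LinearMap.range (I j) := by
    intro j; exact Submodule.map_top (I j)
  -- split heq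
  have hsplit : (m : ℝ≥0∞)
      = (p j0)⁻¹ * (k j0 : ℝ≥0∞)
        + ∑ j ∈ Finset.univ.erase j0,
            (p j)⁻¹ * (finrank ℝ ((⊤ : Submodule ℝ (Fin m → ℝ)).map (I j)) : ℝ≥0∞) := by
    rw [heq, ← Finset.add_sum_erase Finset.univ _ (Finset.mem_univ j0)]
    congr 2
    rw [htop j0, hrk]
  set S : ℝ≥0∞ := ∑ j ∈ Finset.univ.erase j0,
      (p j)⁻¹ * (finrank ℝ ((⊤ : Submodule ℝ (Fin m → ℝ)).map (I j)) : ℝ≥0∞) with hS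
  have hSne : S ≠ ⊤ := by
    intro h
    rw [h, add_top] at hsplit
    exact (ENNReal.natCast_ne_top m) hsplit
  -- bound from hdim applied to W
  have h1 : (finrank ℝ W : ℝ≥0∞) ≤ S := by
    calc (finrank ℝ W : ℝ≥0∞)
        ≤ ∑ j : Fin n, (p j)⁻¹ * (finrank ℝ (W.map (I j)) : ℝ≥0∞) := hdim W
      _ = (p j0)⁻¹ * (finrank ℝ (W.map (I j0)) : ℝ≥0∞)
            + ∑ j ∈ Finset.univ.erase j0,
                (p j)⁻¹ * (finrank ℝ (W.map (I j)) : ℝ≥0∞) :=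
          (Finset.add_sum_erase Finset.univ _ (Finset.mem_univ j0)).symm
      _ = ∑ j ∈ Finset.univ.erase j0,
                (p j)⁻¹ * (finrank ℝ (W.map (I j)) : ℝ≥0∞) := by
          rw [hmapW]; simp
      _ ≤ S := by
          apply Finset.sum_le_sum
          intro j _
          gcongr
          exact_mod_cast Nat.cast_le.mpr
            (Submodule.finrank_mono (Submodule.map_mono le_top))
  -- strict inequality
  have hk0' : (k j0 : ℝ≥0∞) ≠ 0 := by exact_mod_cast hk0.ne'
  have hlt : (k j0 : ℝ≥0∞) < (p j0)⁻¹ * (k j0 : ℝ≥0∞) := by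
    have h1lt : (1 : ℝ≥0∞) < (p j0)⁻¹ := ENNReal.one_lt_inv.mpr hp0
    calc (k j0 : ℝ≥0∞) = 1 * (k j0 : ℝ≥0∞) := (one_mul _).symm
      _ < (p j0)⁻¹ * (k j0 : ℝ≥0∞) :=
        ENNReal.mul_lt_mul_iff_left hk0' (ENNReal.natCast_ne_top _) |>.mpr h1lt
  have : (m : ℝ≥0∞) < (m : ℝ≥0∞) := by
    calc (m : ℝ≥0∞) = (finrank ℝ W : ℝ≥0∞) + (k j0 : ℝ≥0∞) := by
          exact_mod_cast congrArg (Nat.cast : ℕ → ℝ≥0∞) hWrank.symm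
      _ ≤ S + (k j0 : ℝ≥0∞) := by gcongr
      _ < S + (p j0)⁻¹ * (k j0 : ℝ≥0∞) := ENNReal.add_lt_add_left hSne hlt
      _ = (m : ℝ≥0∞) := by rw [add_comm]; exact hsplit.symm
  exact lt_irrefl _ this
end
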